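/- Let λ = (λ_1 ≥ λ_2 ≥ …) be a partition of k. Then ∑_{j≥2} λ_j^2 + ∑_{j≥2} ∑_{i=2}^{j-1} λ_i λ_j − ∑_{j≥1} (j−1) λ_j ≥ ∑_{j≥2} (j−1) λ_j (λ_j − 1) ≥ 0. In particular, (1/2)k(k−1) + ∑_j [(1/2)λ_j(λ_j − 1) − (j−1)λ_j] − k(λ_1 − 1) ≥ 0. -/

import Mathlib

open BigOperators Finset

lemma sq_sum_aux6 (f : ℕ → ℤ) (n : ℕ) :
    (∑ j ∈ Finset.range n, f j) ^ 2 =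
      ∑ j ∈ Finset.range n, (f j) ^ 2 +
        2 * ∑ j ∈ Finset.range n, ∑ i ∈ Finset.range j, f i * f j := by
  induction n with
  | zero => simp
  | succ n ih =>
    rw [Finset.sum_range_succ, add_sq, ih, Finset.sum_range_succ (fun j => (f j) ^ 2),
      Finset.sum_range_succ (fun j => ∑ i ∈ Finset.range j, f i * f j), ← Finset.sum_mul]
    ring

/- `lam j` is the (j+1)-st part of a partition of `k` (0-indexed rows). -/
theorem stmt6 (k : ℕ) (lam : ℕ → ℕ) (hanti : Antitone lam)
    (hsum : ∑ j ∈ Finset.range k, lam j = k)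
    (hzero : ∀ j, k ≤ j → lam j = 0) :
    ((∑ j ∈ Finset.Ico 1 k, (lam j : ℤ) ^ 2) +
        (∑ j ∈ Finset.Ico 1 k, ∑ i ∈ Finset.Ico 1 j, (lam i : ℤ) * lam j) -
        ∑ j ∈ Finset.range k, (j : ℤ) * lam j ≥
      ∑ j ∈ Finset.Ico 1 k, (j : ℤ) * lam j * ((lam j : ℤ) - 1)) ∧
    (0 ≤ ∑ j ∈ Finset.Ico 1 k, (j : ℤ) * lam j * ((lam j : ℤ) - 1)) ∧
    (0 ≤ (k : ℝ) * ((k : ℝ) - 1) / 2 +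
        (∑ j ∈ Finset.range k, ((lam j : ℝ) * ((lam j : ℝ) - 1) / 2 - (j : ℝ) * lam j)) -
        (k : ℝ) * ((lam 0 : ℝ) - 1)) := by
  rcases Nat.eq_zero_or_pos k with hk0 | hk
  · subst hk0; simp
  -- Part 2 first
  have h2 : 0 ≤ ∑ j ∈ Finset.Ico 1 k, (j : ℤ) * lam j * ((lam j : ℤ) - 1) := by
    apply Finset.sum_nonneg
    intro j hj
    rcases Nat.eq_zero_or_pos (lam j) with h | h
    · simp [h]
    · have h1 : (1 : ℤ) ≤ lam j := by exact_mod_cast h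
      have hjn : (0 : ℤ) ≤ j := Int.natCast_nonneg j
      exact mul_nonneg (mul_nonneg hjn (by linarith)) (by linarith)
  -- range sum of j*lam j equals Ico 1 k sum
  have hrange : ∑ j ∈ Finset.range k, (j : ℤ) * lam j
      = ∑ j ∈ Finset.Ico 1 k, (j : ℤ) * lam j := by
    rw [Finset.range_eq_Ico, Finset.sum_eq_sum_Ico_succ_bot hk]
    simp
  -- Part 1
  have h1 : (∑ j ∈ Finset.Ico 1 k, (lam j : ℤ) ^ 2) +
        (∑ j ∈ Finset.Ico 1 k, ∑ i ∈ Finset.Ico 1 j, (lam i : ℤ) * lam j) -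
        ∑ j ∈ Finset.range k, (j : ℤ) * lam j ≥
      ∑ j ∈ Finset.Ico 1 k, (j : ℤ) * lam j * ((lam j : ℤ) - 1) := by
    rw [hrange, ge_iff_le, ← Finset.sum_add_distrib, ← Finset.sum_sub_distrib]
    apply Finset.sum_le_sum
    intro j hj
    obtain ⟨hj1, hjk⟩ := Finset.mem_Ico.mp hj
    have hb : ((j : ℤ) - 1) * ((lam j : ℤ) * lam j) ≤
        ∑ i ∈ Finset.Ico 1 j, (lam i : ℤ) * lam j := by
      have hcard : (Finset.Ico 1 j).card = j - 1 := by simp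
      have hle := Finset.card_nsmul_le_sum (Finset.Ico 1 j)
        (fun i => (lam i : ℤ) * lam j) ((lam j : ℤ) * lam j) ?_
      · rw [hcard, nsmul_eq_mul] at hle
        rwa [Nat.cast_sub hj1, Nat.cast_one] at hle
      · intro i hi
        have hmon : lam j ≤ lam i := hanti (Finset.mem_Ico.mp hi).2.le
        have hmon' : (lam j : ℤ) ≤ lam i := by exact_mod_cast hmon
        have : (0 : ℤ) ≤ lam j := Int.natCast_nonneg _
        exact mul_le_mul_of_nonneg_right hmon' this
    nlinarith [Int.natCast_nonneg (lam j), Int.natCast_nonneg j]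
  refine ⟨h1, h2, ?_⟩
  -- Part 3: integer version
  have hsumZ : ∑ j ∈ Finset.range k, (lam j : ℤ) = k := by exact_mod_cast hsum
  have hsq := sq_sum_aux6 (fun j => (lam j : ℤ)) k
  -- split sums at j = 0
  have hs1 : ∑ j ∈ Finset.range k, (lam j : ℤ)
      = (lam 0 : ℤ) + ∑ j ∈ Finset.Ico 1 k, (lam j : ℤ) := by
    rw [Finset.range_eq_Ico, Finset.sum_eq_sum_Ico_succ_bot hk]
  have hs2 : ∑ j ∈ Finset.range k, (lam j : ℤ) ^ 2
      = (lam 0 : ℤ) ^ 2 + ∑ j ∈ Finset.Ico 1 k, (lam j : ℤ) ^ 2 := by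
    rw [Finset.range_eq_Ico, Finset.sum_eq_sum_Ico_succ_bot hk]
  have hs3 : ∑ j ∈ Finset.range k, ∑ i ∈ Finset.range j, (lam i : ℤ) * lam j
      = (∑ j ∈ Finset.Ico 1 k, (lam 0 : ℤ) * lam j) +
        ∑ j ∈ Finset.Ico 1 k, ∑ i ∈ Finset.Ico 1 j, (lam i : ℤ) * lam j := by
    rw [Finset.range_eq_Ico, Finset.sum_eq_sum_Ico_succ_bot hk, ← Finset.sum_add_distrib,
      show (∑ i ∈ Finset.range 0, (lam i : ℤ) * lam 0) = 0 by simp, zero_add]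
    apply Finset.sum_congr rfl
    intro j hj
    obtain ⟨hj1, _⟩ := Finset.mem_Ico.mp hj
    rw [Finset.range_eq_Ico, Finset.sum_eq_sum_Ico_succ_bot (by omega : 0 < j)]
  have hmul : ∑ j ∈ Finset.Ico 1 k, (lam 0 : ℤ) * lam j
      = (lam 0 : ℤ) * ∑ j ∈ Finset.Ico 1 k, (lam j : ℤ) := by
    rw [Finset.mul_sum]
  have hls : (lam 0 : ℤ) * (∑ j ∈ Finset.range k, (lam j : ℤ))
      = (lam 0 : ℤ) ^ 2 + (lam 0 : ℤ) * ∑ j ∈ Finset.Ico 1 k, (lam j : ℤ) := by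
    rw [hs1]; ring
  have hZ : 0 ≤ (k : ℤ) * ((k : ℤ) - 1) +
      (∑ j ∈ Finset.range k, ((lam j : ℤ) * ((lam j : ℤ) - 1) - 2 * j * lam j)) -
      2 * k * ((lam 0 : ℤ) - 1) := by
    have hexp : ∑ j ∈ Finset.range k, ((lam j : ℤ) * ((lam j : ℤ) - 1) - 2 * j * lam j)
        = ∑ j ∈ Finset.range k, (lam j : ℤ) ^ 2 - ∑ j ∈ Finset.range k, (lam j : ℤ)
          - 2 * ∑ j ∈ Finset.range k, (j : ℤ) * lam j := by
      rw [Finset.mul_sum, ← Finset.sum_sub_distrib, ← Finset.sum_sub_distrib]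
      apply Finset.sum_congr rfl; intro j _; ring
    rw [hexp, ← hsumZ]
    nlinarith [hsq, hs1, hs2, hs3, hmul, hls, h1, h2]
  -- cast to ℝ
  have hR : (0 : ℝ) ≤ ((k : ℤ) * ((k : ℤ) - 1) +
      (∑ j ∈ Finset.range k, ((lam j : ℤ) * ((lam j : ℤ) - 1) - 2 * j * lam j)) -
      2 * k * ((lam 0 : ℤ) - 1) : ℤ) := by exact_mod_cast hZ
  push_cast at hR
  rw [Finset.sum_sub_distrib] at hR
  have e1 : ∑ x ∈ Finset.range k, (2 : ℝ) * x * lam x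
      = 2 * ∑ x ∈ Finset.range k, (x : ℝ) * lam x := by
    rw [Finset.mul_sum]; apply Finset.sum_congr rfl; intros; ring
  rw [e1] at hR
  have e2 : ∑ j ∈ Finset.range k, ((lam j : ℝ) * ((lam j : ℝ) - 1) / 2 - (j : ℝ) * lam j)
      = (∑ j ∈ Finset.range k, (lam j : ℝ) * ((lam j : ℝ) - 1)) / 2
        - ∑ j ∈ Finset.range k, (j : ℝ) * lam j := by
    rw [Finset.sum_div, ← Finset.sum_sub_distrib]
  rw [e2]
  linarith
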